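/- Let a : ℕ → ℝ and r : ℕ → ℝ satisfy a n ≥ 0 and 0 < r n ≤ 1 for all n ≥ 1, and suppose the series ∑_{n≥1} (r 1) * (r 2) * ⋯ * (r n) converges. Define the n-th approximant A n = (a 1 + (a 2 + ⋯ + (a n)^(r n) ⋯ )^(r 2))^(r 1) by backward recurrence. Then the sequence (A n) converges to a finite limit if and only if there exists a constant C such that (a n)^((r 1)*(r 2)*⋯*(r n)) ≤ C for all n ≥ 1 (i.e., limsup (a n)^(r 1 ⋯ r n) < ∞). -/

import Mathlib

open Filter Real Finset

/-- Backward-recurrence approximant of the continued `rᵢ`-th root: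
`crootAppr a r k n = (a k + (a (k+1) + ⋯ + (a n)^(r n) ⋯ )^(r (k+1)))^(r k)`,
with value `0` for `k > n`; real powers (`Real.rpow`) are used. -/
noncomputable def crootAppr (a r : ℕ → ℝ) (k n : ℕ) : ℝ :=
  if h : k > n then 0 else (a k + crootAppr a r (k + 1) n) ^ (r k)
termination_by n + 1 - k
decreasing_by omega

lemma crootAppr_of_gt (a r : ℕ → ℝ) {k n : ℕ} (h : n < k) : crootAppr a r k n = 0 := by
  rw [crootAppr]; exact dif_pos h

lemma crootAppr_of_le (a r : ℕ → ℝ) {k n : ℕ} (h : k ≤ n) :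
    crootAppr a r k n = (a k + crootAppr a r (k + 1) n) ^ (r k) := by
  rw [crootAppr]; exact dif_neg (by omega)

lemma crootAppr_nonneg (a r : ℕ → ℝ) (ha : ∀ n, 1 ≤ n → 0 ≤ a n)
    (k n : ℕ) (hk : 1 ≤ k) : 0 ≤ crootAppr a r k n := by
  suffices H : ∀ m k, n + 1 ≤ k + m → 1 ≤ k → 0 ≤ crootAppr a r k n from
    H (n + 1) k (by omega) hk
  intro m
  induction m with
  | zero => intro k h hk; rw [crootAppr_of_gt a r (by omega)]
  | succ m ih =>
    intro k h hk
    by_cases hkn : k ≤ n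
    · rw [crootAppr_of_le a r hkn]
      exact Real.rpow_nonneg
        (add_nonneg (ha k hk) (ih (k + 1) (by omega) (by omega))) _
    · rw [crootAppr_of_gt a r (by omega)]

lemma crootAppr_mono (a r : ℕ → ℝ) (ha : ∀ n, 1 ≤ n → 0 ≤ a n)
    (hr : ∀ n, 1 ≤ n → 0 < r n ∧ r n ≤ 1)
    (k n : ℕ) (hk : 1 ≤ k) : crootAppr a r k n ≤ crootAppr a r k (n + 1) := by
  suffices H : ∀ m k, n + 1 ≤ k + m → 1 ≤ k →
      crootAppr a r k n ≤ crootAppr a r k (n + 1) from H (n + 1) k (by omega) hk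
  intro m
  induction m with
  | zero =>
    intro k h hk
    rw [crootAppr_of_gt a r (show n < k by omega)]
    exact crootAppr_nonneg a r ha k (n + 1) hk
  | succ m ih =>
    intro k h hk
    by_cases hkn : k ≤ n
    · rw [crootAppr_of_le a r hkn, crootAppr_of_le a r (show k ≤ n + 1 by omega)]
      refine Real.rpow_le_rpow
        (add_nonneg (ha k hk) (crootAppr_nonneg a r ha (k + 1) n (by omega)))
        (add_le_add (le_refl _) (ih (k + 1) (by omega) (by omega)))
        (hr k hk).1.le
    · rw [crootAppr_of_gt a r (by omega)]
      exact crootAppr_nonneg a r ha k (n + 1) hk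

/-- Lower bound: dropping all terms but the last, `a n ^ (r k ⋯ r n) ≤ G k n`. -/
lemma crootAppr_lower (a r : ℕ → ℝ) (ha : ∀ n, 1 ≤ n → 0 ≤ a n)
    (hr : ∀ n, 1 ≤ n → 0 < r n ∧ r n ≤ 1) :
    ∀ m k n, 1 ≤ k → k + m = n →
      a n ^ (∏ i ∈ Finset.Icc k n, r i) ≤ crootAppr a r k n := by
  intro m
  induction m with
  | zero =>
    intro k n hk hkn
    subst hkn
    simp only [Nat.add_zero]
    rw [crootAppr_of_le a r le_rfl, crootAppr_of_gt a r (by omega), add_zero,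
      Finset.Icc_self, Finset.prod_singleton]
  | succ m ih =>
    intro k n hk hkn
    have hklt : k < n := by omega
    have hprod : ∏ i ∈ Finset.Icc k n, r i =
        (∏ i ∈ Finset.Icc (k + 1) n, r i) * r k := by
      rw [← Finset.Ico_add_one_right_eq_Icc, ← Finset.Ico_add_one_right_eq_Icc,
        Finset.prod_eq_prod_Ico_succ_bot (by omega) r, mul_comm]
    rw [crootAppr_of_le a r hklt.le, hprod, Real.rpow_mul (ha n (by omega))]
    have h1 : (a n ^ (∏ i ∈ Finset.Icc (k + 1) n, r i)) ^ (r k) ≤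
        (crootAppr a r (k + 1) n) ^ (r k) :=
      Real.rpow_le_rpow (Real.rpow_nonneg (ha n (by omega)) _)
        (ih (k + 1) n (by omega) (by omega)) (hr k hk).1.le
    refine h1.trans (Real.rpow_le_rpow
      (crootAppr_nonneg a r ha (k + 1) n (by omega))
      (le_add_of_nonneg_left (ha k hk)) (hr k hk).1.le)

/-- Upper bound à la Herschfeld: if `a j ^ (Q j) ≤ C` with `C ≥ 1`, then
`G k n ≤ C ^ (Q (k-1))⁻¹ * 2 ^ (∑_{j=k}^n Q j / Q (k-1))`. -/
lemma crootAppr_upper (a r : ℕ → ℝ) (ha : ∀ n, 1 ≤ n → 0 ≤ a n)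
    (hr : ∀ n, 1 ≤ n → 0 < r n ∧ r n ≤ 1) (C : ℝ) (hC : 1 ≤ C)
    (hbd : ∀ n, 1 ≤ n → a n ^ (∏ i ∈ Finset.Icc 1 n, r i) ≤ C) :
    ∀ m k n, n + 1 ≤ k + m → 1 ≤ k →
      crootAppr a r k n ≤ C ^ (∏ i ∈ Finset.Icc 1 (k - 1), r i)⁻¹ *
        2 ^ (∑ j ∈ Finset.Icc k n,
          (∏ i ∈ Finset.Icc 1 j, r i) / (∏ i ∈ Finset.Icc 1 (k - 1), r i)) := by
  have hCpos : (0:ℝ) < C := lt_of_lt_of_le one_pos hC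
  have hQpos : ∀ j, (0:ℝ) < ∏ i ∈ Finset.Icc 1 j, r i := by
    intro j
    exact Finset.prod_pos fun i hi => (hr i (Finset.mem_Icc.mp hi).1).1
  intro m
  induction m with
  | zero =>
    intro k n h hk
    rw [crootAppr_of_gt a r (by omega)]
    exact mul_nonneg (Real.rpow_nonneg hCpos.le _) (Real.rpow_nonneg (by norm_num) _)
  | succ m ih =>
    intro k n h hk
    by_cases hkn : k ≤ n
    · obtain ⟨k', rfl⟩ : ∃ k', k = k' + 1 := ⟨k - 1, by omega⟩
      have hk1 : k' + 1 - 1 = k' := by omega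
      set Qk' : ℝ := ∏ i ∈ Finset.Icc 1 k', r i with hQk'
      set Qk : ℝ := ∏ i ∈ Finset.Icc 1 (k' + 1), r i with hQk
      have hQrec : Qk = Qk' * r (k' + 1) := Finset.prod_Icc_succ_top (by omega) r
      have hrk := hr (k' + 1) (by omega)
      have hrkne : r (k' + 1) ≠ 0 := hrk.1.ne'
      have hQk'ne : Qk' ≠ 0 := (hQpos k').ne'
      -- bound on a k
      have hak : a (k' + 1) ≤ C ^ (Qk)⁻¹ := by
        have := Real.rpow_le_rpow (Real.rpow_nonneg (ha _ (by omega)) _)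
          (hbd (k' + 1) (by omega)) (inv_nonneg.mpr (hQpos (k' + 1)).le)
        rwa [← Real.rpow_mul (ha _ (by omega)), mul_inv_cancel₀ (hQpos (k' + 1)).ne',
          Real.rpow_one] at this
      -- inductive bound on the tail
      have htail := ih (k' + 2) n (by omega) (by omega)
      simp only [show k' + 2 - 1 = k' + 1 from rfl] at htail
      set s : ℝ := ∑ j ∈ Finset.Icc (k' + 2) n,
        (∏ i ∈ Finset.Icc 1 j, r i) / Qk with hs
      have hs0 : 0 ≤ s :=
        Finset.sum_nonneg fun j _ => div_nonneg (hQpos j).le (hQpos _).le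
      have hsum_le : a (k' + 1) + crootAppr a r (k' + 2) n ≤ C ^ (Qk)⁻¹ * 2 ^ (1 + s) := by
        have h2s : (1:ℝ) + 2 ^ s ≤ 2 ^ (1 + s) := by
          rw [Real.rpow_add two_pos, Real.rpow_one, two_mul]
          have : (1:ℝ) ≤ 2 ^ s := Real.one_le_rpow one_le_two hs0
          linarith
        have hC1 : (1:ℝ) ≤ C ^ (Qk)⁻¹ :=
          Real.one_le_rpow hC (inv_nonneg.mpr (hQpos _).le)
        calc a (k' + 1) + crootAppr a r (k' + 2) n
            ≤ C ^ (Qk)⁻¹ + C ^ (Qk)⁻¹ * 2 ^ s := add_le_add hak htail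
          _ = C ^ (Qk)⁻¹ * (1 + 2 ^ s) := by ring
          _ ≤ C ^ (Qk)⁻¹ * 2 ^ (1 + s) := by
              exact mul_le_mul_of_nonneg_left h2s (by linarith)
      rw [crootAppr_of_le a r hkn]
      have hnonneg : 0 ≤ a (k' + 1) + crootAppr a r (k' + 2) n :=
        add_nonneg (ha _ (by omega)) (crootAppr_nonneg a r ha _ n (by omega))
      have hstep : (a (k' + 1) + crootAppr a r (k' + 2) n) ^ r (k' + 1) ≤
          (C ^ (Qk)⁻¹ * 2 ^ (1 + s)) ^ r (k' + 1) :=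
        Real.rpow_le_rpow hnonneg hsum_le hrk.1.le
      refine hstep.trans_eq ?_
      rw [Real.mul_rpow (Real.rpow_nonneg hCpos.le _) (Real.rpow_nonneg (by norm_num) _),
        ← Real.rpow_mul hCpos.le, ← Real.rpow_mul (by norm_num : (0:ℝ) ≤ 2)]
      rw [hk1]
      congr 1
      · -- C exponents: Qk⁻¹ * r (k'+1) = Qk'⁻¹
        congr 1
        rw [hQrec, ← hQk', mul_inv, mul_assoc, inv_mul_cancel₀ hrkne, mul_one]
      · -- 2 exponents
        congr 1
        have hsplit : ∑ j ∈ Finset.Icc (k' + 1) n,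
            (∏ i ∈ Finset.Icc 1 j, r i) / Qk' =
            Qk / Qk' + ∑ j ∈ Finset.Icc (k' + 2) n,
              (∏ i ∈ Finset.Icc 1 j, r i) / Qk' := by
          rw [← Finset.Ico_add_one_right_eq_Icc, ← Finset.Ico_add_one_right_eq_Icc,
            Finset.sum_eq_sum_Ico_succ_bot (by omega)]
        rw [hsplit, add_mul, one_mul, hs, Finset.sum_mul]
        congr 1
        · rw [hQrec]; field_simp
        · refine Finset.sum_congr rfl fun j _ => ?_
          rw [hQrec]
          field_simp
    · rw [crootAppr_of_gt a r (by omega)]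
      exact mul_nonneg (Real.rpow_nonneg hCpos.le _) (Real.rpow_nonneg (by norm_num) _)

/-- Theorem III of Herschfeld (1935): for `a n ≥ 0`, `0 < r n ≤ 1` with
`∑ (r 1)⋯(r n)` convergent, the continued `rᵢ`-th root converges iff
`limsup (a n)^((r 1)⋯(r n)) < ∞`. -/
theorem continued_root_converges_iff (a r : ℕ → ℝ)
    (ha : ∀ n, 1 ≤ n → 0 ≤ a n)
    (hr : ∀ n, 1 ≤ n → 0 < r n ∧ r n ≤ 1)
    (hsum : Summable fun n => ∏ i ∈ Finset.Icc 1 n, r i) :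
    (∃ L : ℝ, Tendsto (fun n => crootAppr a r 1 n) atTop (nhds L)) ↔
      (∃ C : ℝ, ∀ n, 1 ≤ n → (a n) ^ (∏ i ∈ Finset.Icc 1 n, r i) ≤ C) := by
  have hQpos : ∀ j, (0:ℝ) < ∏ i ∈ Finset.Icc 1 j, r i := by
    intro j
    exact Finset.prod_pos fun i hi => (hr i (Finset.mem_Icc.mp hi).1).1
  constructor
  · rintro ⟨L, hL⟩
    obtain ⟨C, hC⟩ := hL.bddAbove_range
    refine ⟨C, fun n hn => ?_⟩
    calc a n ^ (∏ i ∈ Finset.Icc 1 n, r i) ≤ crootAppr a r 1 n :=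
          crootAppr_lower a r ha hr (n - 1) 1 n le_rfl (by omega)
      _ ≤ C := hC ⟨n, rfl⟩
  · rintro ⟨C, hC⟩
    set C' : ℝ := max C 1 with hC'def
    have hC'1 : (1:ℝ) ≤ C' := le_max_right _ _
    have hbd : ∀ n, 1 ≤ n → a n ^ (∏ i ∈ Finset.Icc 1 n, r i) ≤ C' :=
      fun n hn => (hC n hn).trans (le_max_left _ _)
    set S : ℝ := ∑' n, ∏ i ∈ Finset.Icc 1 n, r i with hS
    have hbound : ∀ n, crootAppr a r 1 n ≤ C' * 2 ^ S := by
      intro n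
      have h0 : ∏ i ∈ Finset.Icc 1 0, r i = 1 := by simp
      have := crootAppr_upper a r ha hr C' hC'1 hbd (n + 1) 1 n (by omega) le_rfl
      simp only [show (1:ℕ) - 1 = 0 from rfl, h0, inv_one, Real.rpow_one, div_one] at this
      refine this.trans ?_
      have hsum_le : ∑ j ∈ Finset.Icc 1 n, ∏ i ∈ Finset.Icc 1 j, r i ≤ S :=
        hsum.sum_le_tsum _ (fun i _ => (hQpos i).le)
      have h2 : (2:ℝ) ^ (∑ j ∈ Finset.Icc 1 n, ∏ i ∈ Finset.Icc 1 j, r i) ≤ 2 ^ S :=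
        Real.rpow_le_rpow_of_exponent_le one_le_two hsum_le
      exact mul_le_mul_of_nonneg_left h2 (by linarith)
    have hmono : Monotone fun n => crootAppr a r 1 n :=
      monotone_nat_of_le_succ fun n => crootAppr_mono a r ha hr 1 n le_rfl
    exact ⟨_, tendsto_atTop_ciSup hmono ⟨C' * 2 ^ S, fun x ⟨n, hn⟩ => hn ▸ hbound n⟩⟩
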